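/- Let a and b be integers with 2 ≤ a < b and a dividing b. Let (e_k) be a sequence of positive integers indexed by k ≥ 1 such that e_1 ≥ 1 and a^(e_k) > b^(e_{k-1}) for all k ≥ 2. If N is a positive integer divisible by a^(e_k) for some k ≥ 1, and N is not divisible by b, then the number of nonzero digits in the base-b expansion of N is at least k. -/

import Mathlib

/-- Number of nonzero digits in the base-`b` expansion of `N`. -/
def countNonzeroDigits (b N : ℕ) : ℕ :=
  ((Nat.digits b N).filter (· ≠ 0)).length

lemma cnd_step (b n : ℕ) (hb : 2 ≤ b) :
    countNonzeroDigits b n =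
      (if n % b = 0 then 0 else 1) + countNonzeroDigits b (n / b) := by
  rcases Nat.eq_zero_or_pos n with rfl | hn
  · simp [countNonzeroDigits]
  · unfold countNonzeroDigits
    rw [Nat.digits_def' (by omega) hn]
    simp only [List.filter]
    split_ifs with h
    · simp [h]
    · simp [h, Nat.add_comm]

lemma cnd_pos (b n : ℕ) (hn : n ≠ 0) : 1 ≤ countNonzeroDigits b n := by
  have h1 : Nat.digits b n ≠ [] := Nat.digits_ne_nil_iff_ne_zero.mpr hn
  have h2 := Nat.getLast_digit_ne_zero b hn
  have : (Nat.digits b n).getLast h1 ∈ (Nat.digits b n).filter (· ≠ 0) :=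
    List.mem_filter.mpr ⟨List.getLast_mem h1, by simpa using h2⟩
  have := List.length_pos_iff.mpr (List.ne_nil_of_mem this)
  exact this

lemma cnd_split (b : ℕ) (hb : 2 ≤ b) (m : ℕ) : ∀ n : ℕ,
    countNonzeroDigits b (n % b ^ m) + countNonzeroDigits b (n / b ^ m)
      ≤ countNonzeroDigits b n := by
  induction m with
  | zero => intro n; simp [countNonzeroDigits, Nat.mod_one]
  | succ m ih =>
    intro n
    have h1 : n % b ^ (m + 1) % b = n % b :=
      Nat.mod_mod_of_dvd n (dvd_pow_self b (by omega))
    have h2 : n % b ^ (m + 1) / b = n / b % b ^ m := by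
      rw [pow_succ, mul_comm, Nat.mod_mul_right_div_self]
    have h3 : n / b ^ (m + 1) = n / b / b ^ m := by
      rw [pow_succ, mul_comm, Nat.div_div_eq_div_mul, mul_comm]
    rw [cnd_step b n hb, cnd_step b (n % b ^ (m + 1)) hb, h1, h2, h3]
    have := ih (n / b)
    omega

theorem stmt_2 (a b : ℕ) (ha : 2 ≤ a) (hab : a < b) (hdvd : a ∣ b)
    (e : ℕ → ℕ) (he1 : 1 ≤ e 1)
    (hstep : ∀ k ≥ 2, a ^ e k > b ^ e (k - 1))
    (N : ℕ) (hN : 0 < N) (k : ℕ) (hk : 1 ≤ k)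
    (hNdvd : a ^ e k ∣ N) (hnd : ¬ (b ∣ N)) :
    countNonzeroDigits b N ≥ k := by
  have hb : 2 ≤ b := by omega
  have hepos : ∀ j, 1 ≤ j → e j ≠ 0 := by
    intro j hj h0
    rcases Nat.lt_or_ge j 2 with h2 | h2
    · have hj1 : j = 1 := by omega
      rw [hj1] at h0; omega
    · have hs := hstep j h2
      have hp : 0 < b ^ e (j - 1) := pow_pos (by omega) _
      simp [h0] at hs
      omega
  revert hN hNdvd hnd
  induction k, hk using Nat.le_induction generalizing N with
  | base => intro hN _ _; exact cnd_pos b N (by omega)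
  | succ k hk ih =>
    intro hN hNdvd hnd
    set m := e k with hm
    -- key inequalities
    have hgt : b ^ m < a ^ e (k + 1) := by
      have := hstep (k + 1) (by omega)
      simpa using this
    have hba : a ^ m ≤ b ^ m := Nat.pow_le_pow_left (le_of_lt hab) m
    have hle : m ≤ e (k + 1) := by
      have : a ^ m < a ^ e (k + 1) := lt_of_le_of_lt hba hgt
      exact le_of_lt ((Nat.pow_lt_pow_iff_right (by omega)).mp this)
    have hNge : a ^ e (k + 1) ≤ N := Nat.le_of_dvd hN hNdvd
    -- low and high parts
    have hRmod : N % b ^ m % b = N % b :=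
      Nat.mod_mod_of_dvd N (dvd_pow_self b (hepos k (by omega)))
    have hndR : ¬ b ∣ N % b ^ m := by
      intro h
      exact hnd ((Nat.dvd_mod_iff (dvd_pow_self b (hepos k (by omega)))).mp h)
    have hRpos : 0 < N % b ^ m := by
      rcases Nat.eq_zero_or_pos (N % b ^ m) with h | h
      · exact absurd (h ▸ dvd_zero b) hndR
      · exact h
    have haR : a ^ m ∣ N % b ^ m := by
      refine (Nat.dvd_mod_iff ?_).mpr ?_
      · exact pow_dvd_pow_of_dvd hdvd m
      · exact dvd_trans (pow_dvd_pow a hle) hNdvd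
    have hR := ih (N % b ^ m) hRpos haR hndR
    have hQpos : 0 < N / b ^ m :=
      Nat.one_le_div_iff (pow_pos (by omega) m) |>.mpr (by omega)
    have hQ := cnd_pos b (N / b ^ m) (by omega)
    have := cnd_split b hb m N
    omega
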